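/- arXiv:1906.10967 — 2 statements merged into one kernel-verified Lean document; each statement's English description precedes it below -/
import Mathlib

section
/- Let Γ be a symmetric positive definite p×p matrix, Υ a p×r full-rank matrix, and C := (I_p − Γ^{1/2} Υ (Υ' Γ Υ)^{-1} Υ' Γ^{1/2}) Γ^{-1/2}. Then Γ C' C Γ C' C Γ = Γ C' C Γ, i.e., the condition Σ C' C Σ C' C Σ = Σ C' C Σ of Assumption B(iii) holds with Σ = Γ. -/
open Matrix

section OldSqrt

open scoped ComplexOrder

noncomputable def Matrix.PosSemidef.sqrt {n 𝕜 : Type*} [Fintype n] [DecidableEq n] [RCLike 𝕜]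
    {A : Matrix n n 𝕜} (hA : A.PosSemidef) : Matrix n n 𝕜 :=
  (hA.1.eigenvectorUnitary : Matrix n n 𝕜) * diagonal (((↑) : ℝ → 𝕜) ∘ (√·) ∘ hA.1.eigenvalues) *
    (star hA.1.eigenvectorUnitary : Matrix n n 𝕜)

end OldSqrt

theorem oldSqrt_mul_self {n : Type*} [Fintype n] [DecidableEq n]
    {A : Matrix n n ℝ} (hA : A.PosSemidef) : hA.sqrt * hA.sqrt = A := by
  have hU : (star hA.1.eigenvectorUnitary : Matrix n n ℝ) * (hA.1.eigenvectorUnitary : Matrix n n ℝ) = 1 :=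
    Unitary.star_mul_self_of_mem (SetLike.coe_mem _)
  have hD : diagonal (((↑) : ℝ → ℝ) ∘ (√·) ∘ hA.1.eigenvalues) *
      diagonal (((↑) : ℝ → ℝ) ∘ (√·) ∘ hA.1.eigenvalues) = diagonal (RCLike.ofReal ∘ hA.1.eigenvalues) := by
    rw [diagonal_mul_diagonal]
    congr 1; funext i
    simp [Real.mul_self_sqrt (hA.eigenvalues_nonneg i)]
  conv_rhs => rw [hA.1.spectral_theorem, Unitary.conjStarAlgAut_apply]
  unfold Matrix.PosSemidef.sqrt
  rw [← hD]
  simp only [Matrix.mul_assoc]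
  rw [← Matrix.mul_assoc (star _ : Matrix n n ℝ) _ _, hU, Matrix.one_mul]
  rfl

theorem oldSqrt_transpose {n : Type*} [Fintype n] [DecidableEq n]
    {A : Matrix n n ℝ} (hA : A.PosSemidef) : hA.sqrtᵀ = hA.sqrt := by
  unfold Matrix.PosSemidef.sqrt
  rw [transpose_mul, transpose_mul, diagonal_transpose, star_eq_conjTranspose,
    conjTranspose_eq_transpose_of_trivial, transpose_transpose, Matrix.mul_assoc]


theorem stmt3 (p r : ℕ)
    (Γ : Matrix (Fin p) (Fin p) ℝ) (hΓ : Γ.PosDef)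
    (Υ : Matrix (Fin p) (Fin r) ℝ) (hΥ : Υ.rank = r) :
    let R := hΓ.posSemidef.sqrt
    let C := ((1 : Matrix (Fin p) (Fin p) ℝ) - R * Υ * (Υᵀ * Γ * Υ)⁻¹ * Υᵀ * R) * R⁻¹
    Γ * Cᵀ * C * Γ * Cᵀ * C * Γ = Γ * Cᵀ * C * Γ := by
  intro R C
  -- basic facts about R
  have hR2 : R * R = Γ := oldSqrt_mul_self hΓ.posSemidef
  have hRsym : Rᵀ = R := by
    exact oldSqrt_transpose _
  have hdetΓ : IsUnit Γ.det := isUnit_iff_ne_zero.mpr hΓ.det_pos.ne'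
  have hdetR : IsUnit R.det := by
    have : R.det * R.det = Γ.det := by rw [← det_mul, hR2]
    exact isUnit_of_mul_isUnit_left (this ▸ hdetΓ)
  have hRinv : R * R⁻¹ = 1 := mul_nonsing_inv R hdetR
  have hRinv' : R⁻¹ * R = 1 := nonsing_inv_mul R hdetR
  -- Υ has injective mulVec
  have hinj : Function.Injective (Υ.mulVec) := by
    have hker : LinearMap.ker Υ.mulVecLin = ⊥ := by
      have h1 := LinearMap.finrank_range_add_finrank_ker Υ.mulVecLin
      rw [Module.finrank_fintype_fun_eq_card, Fintype.card_fin] at h1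
      have h2 : Module.finrank ℝ (LinearMap.range Υ.mulVecLin) = r := hΥ
      rw [h2, Nat.add_right_cancel_iff.mpr rfl] at h1
      exact Submodule.finrank_eq_zero.mp (by omega)
    intro x y hxy
    have : Υ.mulVecLin (x - y) = 0 := by
      simp [mulVecLin_apply, mulVec_sub, hxy]
    have := hker ▸ LinearMap.mem_ker.mpr this
    simpa [sub_eq_zero] using this
  -- Υᵀ * Γ * Υ is positive definite, hence invertible
  have hΓsym : Γᵀ = Γ := by
    rw [← conjTranspose_eq_transpose_of_trivial]; exact hΓ.1
  have hM : (Υᵀ * Γ * Υ).PosDef := by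
    refine PosDef.of_dotProduct_mulVec_pos ?_ ?_
    · rw [IsHermitian, conjTranspose_eq_transpose_of_trivial]
      simp [transpose_mul, hΓsym, Matrix.mul_assoc]
    · intro x hx
      have hx' : Υ *ᵥ x ≠ 0 := fun h => hx (hinj (by simpa using h))
      have := hΓ.dotProduct_mulVec_pos hx'
      simpa [star_trivial, mul_assoc, ← mulVec_mulVec, dotProduct_mulVec,
        vecMul_transpose] using this
  have hdetM : IsUnit (Υᵀ * Γ * Υ).det := isUnit_iff_ne_zero.mpr hM.det_pos.ne'
  have hMinv : (Υᵀ * Γ * Υ)⁻¹ * (Υᵀ * Γ * Υ) = 1 := nonsing_inv_mul _ hdetM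
  -- the projection P
  set P : Matrix (Fin p) (Fin p) ℝ := R * Υ * (Υᵀ * Γ * Υ)⁻¹ * Υᵀ * R with hP
  have hPsym : Pᵀ = P := by
    have hMsym : (Υᵀ * Γ * Υ)ᵀ = Υᵀ * Γ * Υ := by
      simp [transpose_mul, hΓsym, Matrix.mul_assoc]
    have hMinvSym : ((Υᵀ * Γ * Υ)⁻¹)ᵀ = (Υᵀ * Γ * Υ)⁻¹ := by
      rw [transpose_nonsing_inv, hMsym]
    simp only [hP, transpose_mul, transpose_transpose, hRsym, hMinvSym]
    simp only [Matrix.mul_assoc]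
  have hPidem : P * P = P := by
    have : P * P = R * Υ * ((Υᵀ * Γ * Υ)⁻¹ * ((Υᵀ * (R * R) * Υ) * (Υᵀ * Γ * Υ)⁻¹)) * Υᵀ * R := by
      simp only [hP, Matrix.mul_assoc]
    rw [this, hR2, ← Matrix.mul_assoc (Υᵀ * Γ * Υ)⁻¹, hMinv, Matrix.one_mul]
  -- rewrite C
  have hC : C = (1 - P) * R⁻¹ := by simp only [C, hP]
  have hCT : Cᵀ = R⁻¹ * (1 - P) := by
    rw [hC, transpose_mul, transpose_sub, transpose_one, hPsym,
      transpose_nonsing_inv, hRsym]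
  have hQidem : (1 - P) * (1 - P) = 1 - P := by
    simp only [Matrix.mul_sub, Matrix.sub_mul, Matrix.one_mul, Matrix.mul_one, hPidem]
    abel
  have key : Γ * Cᵀ * C = R * (1 - P) * R⁻¹ := by
    rw [hCT, hC, ← hR2]
    calc R * R * (R⁻¹ * (1 - P)) * ((1 - P) * R⁻¹)
        = R * (R * R⁻¹) * ((1 - P) * (1 - P)) * R⁻¹ := by noncomm_ring
      _ = R * (1 - P) * R⁻¹ := by rw [hRinv, hQidem, Matrix.mul_one]
  have key2 : Γ * Cᵀ * C * (Γ * Cᵀ * C) = Γ * Cᵀ * C := by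
    rw [key]
    calc R * (1 - P) * R⁻¹ * (R * (1 - P) * R⁻¹)
        = R * ((1 - P) * (R⁻¹ * R) * (1 - P)) * R⁻¹ := by noncomm_ring
      _ = R * (1 - P) * R⁻¹ := by
          rw [hRinv', Matrix.mul_one, hQidem]
  calc Γ * Cᵀ * C * Γ * Cᵀ * C * Γ
      = (Γ * Cᵀ * C * (Γ * Cᵀ * C)) * Γ := by noncomm_ring
    _ = Γ * Cᵀ * C * Γ := by rw [key2]
end

section
/- Let Σ be a p×p symmetric positive semidefinite matrix and C a p×p matrix. Define L := Σ C' (C Σ C')⁻ C Σ, where A⁻ denotes the Moore–Penrose inverse of A. Then L is symmetric, and Σ − L is positive semidefinite. -/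
open Matrix

theorem stmt18 (p : ℕ) (S C M : Matrix (Fin p) (Fin p) ℝ)
    (hS : S.PosSemidef)
    (hMP1 : (C * S * Cᵀ) * M * (C * S * Cᵀ) = C * S * Cᵀ)
    (hMP2 : M * (C * S * Cᵀ) * M = M)
    (hMP3 : ((C * S * Cᵀ) * M)ᵀ = (C * S * Cᵀ) * M)
    (hMP4 : (M * (C * S * Cᵀ))ᵀ = M * (C * S * Cᵀ)) :
    let L := S * Cᵀ * M * C * S
    Lᵀ = L ∧ (S - L).PosSemidef := by
  intro L
  have hSt : Sᵀ = S := by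
    have := hS.isHermitian
    rwa [Matrix.IsHermitian, conjTranspose_eq_transpose_of_trivial] at this
  set B := C * S * Cᵀ with hBdef
  have hBt : Bᵀ = B := by
    simp [hBdef, transpose_mul, hSt, mul_assoc]
  -- M is symmetric (uniqueness of Moore-Penrose inverse of symmetric B)
  have hN1 : B * Mᵀ * B = B := by
    have := congrArg transpose hMP1
    simpa [transpose_mul, hBt, mul_assoc] using this
  have hMB : Mᵀ * B = B * M := by
    have := hMP3
    rw [transpose_mul, hBt] at this
    exact this
  have hBM : B * Mᵀ = M * B := by
    have := hMP4
    rw [transpose_mul, hBt] at this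
    exact this
  have hN2 : Mᵀ * B * Mᵀ = Mᵀ := by
    have := congrArg transpose hMP2
    simpa [transpose_mul, hBt, mul_assoc] using this
  -- M B = Mᵀ B  and  B M = B Mᵀ
  have key1 : M * B = Mᵀ * B := by
    calc M * B = M * (B * Mᵀ * B) := by rw [hN1]
      _ = (M * B) * (Mᵀ * B) := by noncomm_ring
      _ = (B * Mᵀ) * (B * M) := by rw [hBM, hMB]
      _ = (B * Mᵀ * B) * M := by noncomm_ring
      _ = B * M := by rw [hN1]
      _ = Mᵀ * B := hMB.symm
  have key2 : B * M = B * Mᵀ := by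
    calc B * M = (B * Mᵀ * B) * M := by rw [hN1]
      _ = (B * Mᵀ) * (B * M) := by noncomm_ring
      _ = (M * B) * (Mᵀ * B) := by rw [hBM, hMB]
      _ = M * (B * Mᵀ * B) := by noncomm_ring
      _ = M * B := by rw [hN1]
      _ = B * Mᵀ := hBM.symm
  have hMsym : Mᵀ = M := by
    calc Mᵀ = Mᵀ * B * Mᵀ := hN2.symm
      _ = (Mᵀ * B) * Mᵀ := by noncomm_ring
      _ = (M * B) * Mᵀ := by rw [key1]
      _ = M * (B * Mᵀ) := by noncomm_ring
      _ = M * (B * M) := by rw [key2]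
      _ = M * B * M := by noncomm_ring
      _ = M := hMP2
  have hLsym : Lᵀ = L := by
    show (S * Cᵀ * M * C * S)ᵀ = S * Cᵀ * M * C * S
    simp [transpose_mul, hSt, hMsym, mul_assoc]
  refine ⟨hLsym, ?_⟩
  -- square root of S
  set A := (open scoped MatrixOrder in CFC.sqrt S) with hAdef
  have hAA : A * A = S := by
    open scoped MatrixOrder in exact CFC.sqrt_mul_sqrt_self S hS.nonneg
  have hAt : Aᵀ = A := by
    have := (open scoped MatrixOrder in (CFC.sqrt_nonneg S).posSemidef.isHermitian)
    rwa [Matrix.IsHermitian, conjTranspose_eq_transpose_of_trivial] at this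
  set P : Matrix (Fin p) (Fin p) ℝ := A * Cᵀ * M * C * A with hPdef
  have hPsym : Pᵀ = P := by
    simp [hPdef, transpose_mul, hAt, hMsym, mul_assoc]
  have hPidem : P * P = P := by
    calc P * P = A * Cᵀ * (M * (C * (A * A) * Cᵀ) * M) * C * A := by
          rw [hPdef]; noncomm_ring
      _ = A * Cᵀ * (M * B * M) * C * A := by rw [hAA, hBdef]
      _ = A * Cᵀ * M * C * A := by rw [hMP2]
  have hSL : S - L = ((1 - P) * A)ᵀ * ((1 - P) * A) := by
    have hQ : (1 - P)ᵀ * (1 - P) = 1 - P := by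
      rw [transpose_sub, transpose_one, hPsym]
      rw [sub_mul, mul_sub, mul_sub, hPidem]
      noncomm_ring
    calc S - L = A * A - A * (A * Cᵀ * M * C * A) * A := by
          show S - (S * Cᵀ * M * C * S) = _
          rw [← hAA]; noncomm_ring
      _ = A * (1 - P) * A := by rw [hPdef]; noncomm_ring
      _ = Aᵀ * ((1 - P)ᵀ * (1 - P)) * A := by rw [hQ, hAt]
      _ = ((1 - P) * A)ᵀ * ((1 - P) * A) := by
          rw [transpose_mul]; noncomm_ring
  rw [hSL]
  have := Matrix.posSemidef_conjTranspose_mul_self ((1 - P) * A)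
  rwa [conjTranspose_eq_transpose_of_trivial] at this
end
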